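/- The assignments φ(X) = Y⁻¹, φ(Y) = X⁻¹, φ(T) = T extend (uniquely) to a ℂ-algebra anti-automorphism φ of H_{q,t}; that is, φ is a ℂ-linear bijection with φ(1) = 1 and φ(a·b) = φ(b)·φ(a) for all a, b ∈ H_{q,t}. -/

import Mathlib

noncomputable section

/-- Generators of the double affine Hecke algebra of type `A₁`. -/
inductive DGen : Type
  | X | Xi | Y | Yi | T

/-- The defining relations of the double affine Hecke algebra `H_{q,t}` of type `A₁`. -/
inductive DahaRel (q t : ℂ) : FreeAlgebra ℂ DGen → FreeAlgebra ℂ DGen → Prop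
  | XXi : DahaRel q t (FreeAlgebra.ι ℂ DGen.X * FreeAlgebra.ι ℂ DGen.Xi) 1
  | XiX : DahaRel q t (FreeAlgebra.ι ℂ DGen.Xi * FreeAlgebra.ι ℂ DGen.X) 1
  | YYi : DahaRel q t (FreeAlgebra.ι ℂ DGen.Y * FreeAlgebra.ι ℂ DGen.Yi) 1
  | YiY : DahaRel q t (FreeAlgebra.ι ℂ DGen.Yi * FreeAlgebra.ι ℂ DGen.Y) 1
  | TXT : DahaRel q t
      (FreeAlgebra.ι ℂ DGen.T * FreeAlgebra.ι ℂ DGen.X * FreeAlgebra.ι ℂ DGen.T)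
      (FreeAlgebra.ι ℂ DGen.Xi)
  | TYiT : DahaRel q t
      (FreeAlgebra.ι ℂ DGen.T * FreeAlgebra.ι ℂ DGen.Yi * FreeAlgebra.ι ℂ DGen.T)
      (FreeAlgebra.ι ℂ DGen.Y)
  | XY : DahaRel q t (FreeAlgebra.ι ℂ DGen.X * FreeAlgebra.ι ℂ DGen.Y)
      ((q ^ 2) • (FreeAlgebra.ι ℂ DGen.Y * FreeAlgebra.ι ℂ DGen.X *
        FreeAlgebra.ι ℂ DGen.T * FreeAlgebra.ι ℂ DGen.T))
  | hecke : DahaRel q t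
      ((FreeAlgebra.ι ℂ DGen.T - algebraMap ℂ (FreeAlgebra ℂ DGen) t) *
        (FreeAlgebra.ι ℂ DGen.T + algebraMap ℂ (FreeAlgebra ℂ DGen) t⁻¹)) 0

/-- The double affine Hecke algebra `H_{q,t}` of type `A₁`. -/
abbrev DAHA (q t : ℂ) : Type := RingQuot (DahaRel q t)

/-- The generator `X` of `H_{q,t}`. -/
def Xg (q t : ℂ) : DAHA q t := RingQuot.mkAlgHom ℂ (DahaRel q t) (FreeAlgebra.ι ℂ DGen.X)
/-- The generator `X⁻¹` of `H_{q,t}`. -/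
def Xig (q t : ℂ) : DAHA q t := RingQuot.mkAlgHom ℂ (DahaRel q t) (FreeAlgebra.ι ℂ DGen.Xi)
/-- The generator `Y` of `H_{q,t}`. -/
def Yg (q t : ℂ) : DAHA q t := RingQuot.mkAlgHom ℂ (DahaRel q t) (FreeAlgebra.ι ℂ DGen.Y)
/-- The generator `Y⁻¹` of `H_{q,t}`. -/
def Yig (q t : ℂ) : DAHA q t := RingQuot.mkAlgHom ℂ (DahaRel q t) (FreeAlgebra.ι ℂ DGen.Yi)
/-- The generator `T` of `H_{q,t}`. -/
def Tg (q t : ℂ) : DAHA q t := RingQuot.mkAlgHom ℂ (DahaRel q t) (FreeAlgebra.ι ℂ DGen.T)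

namespace DahaAux

variable (q t : ℂ)

lemma relXXi : Xg q t * Xig q t = 1 := by
  have h := RingQuot.mkAlgHom_rel ℂ (DahaRel.XXi (q := q) (t := t))
  simpa [Xg, Xig, map_mul] using h

lemma relXiX : Xig q t * Xg q t = 1 := by
  have h := RingQuot.mkAlgHom_rel ℂ (DahaRel.XiX (q := q) (t := t))
  simpa [Xg, Xig, map_mul] using h

lemma relYYi : Yg q t * Yig q t = 1 := by
  have h := RingQuot.mkAlgHom_rel ℂ (DahaRel.YYi (q := q) (t := t))
  simpa [Yg, Yig, map_mul] using h

lemma relYiY : Yig q t * Yg q t = 1 := by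
  have h := RingQuot.mkAlgHom_rel ℂ (DahaRel.YiY (q := q) (t := t))
  simpa [Yg, Yig, map_mul] using h

lemma relTXT : Tg q t * Xg q t * Tg q t = Xig q t := by
  have h := RingQuot.mkAlgHom_rel ℂ (DahaRel.TXT (q := q) (t := t))
  simpa [Tg, Xg, Xig, map_mul] using h

lemma relTYiT : Tg q t * Yig q t * Tg q t = Yg q t := by
  have h := RingQuot.mkAlgHom_rel ℂ (DahaRel.TYiT (q := q) (t := t))
  simpa [Tg, Yg, Yig, map_mul] using h

lemma relXY : Xg q t * Yg q t = (q ^ 2) • (Yg q t * Xg q t * Tg q t * Tg q t) := by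
  have h := RingQuot.mkAlgHom_rel ℂ (DahaRel.XY (q := q) (t := t))
  simpa [Xg, Yg, Tg, map_mul, map_smul] using h

lemma relHecke :
    (Tg q t - algebraMap ℂ (DAHA q t) t) * (Tg q t + algebraMap ℂ (DAHA q t) t⁻¹) = 0 := by
  have h := RingQuot.mkAlgHom_rel ℂ (DahaRel.hecke (q := q) (t := t))
  simpa [Tg, map_mul, map_sub, map_add, AlgHom.commutes] using h

lemma relHecke' :
    (Tg q t + algebraMap ℂ (DAHA q t) t⁻¹) * (Tg q t - algebraMap ℂ (DAHA q t) t) = 0 := by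
  have hc : Commute (Tg q t - algebraMap ℂ (DAHA q t) t)
      (Tg q t + algebraMap ℂ (DAHA q t) t⁻¹) :=
    (((Commute.refl (Tg q t)).sub_left (Algebra.commutes t (Tg q t))).add_right
      ((Algebra.commutes t⁻¹ (Tg q t - algebraMap ℂ (DAHA q t) t)).symm))
  rw [← hc.eq]
  exact relHecke q t

lemma step1 : Yig q t * Xg q t = (q ^ 2) • (Xg q t * Tg q t * Tg q t * Yig q t) := by
  have h : Yig q t * Xg q t = Yig q t * (Xg q t * Yg q t) * Yig q t := by
    simp [mul_assoc, relYYi]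
  rw [h, relXY]
  simp only [mul_assoc, smul_mul_assoc, mul_smul_comm]
  rw [← mul_assoc (Yig q t) (Yg q t), relYiY, one_mul]

lemma keyXiYi : Xig q t * Yig q t = (q ^ 2) • (Tg q t * Tg q t * Yig q t * Xig q t) := by
  have h : Xig q t * Yig q t = Xig q t * (Yig q t * Xg q t) * Xig q t := by
    simp [mul_assoc, relXXi]
  rw [h, step1]
  simp only [mul_assoc, smul_mul_assoc, mul_smul_comm]
  rw [← mul_assoc (Xig q t) (Xg q t), relXiX, one_mul]

end DahaAux

namespace DahaAux

open MulOpposite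

variable (q t : ℂ)

/-- Images of the generators in the opposite algebra. -/
def f : DGen → (DAHA q t)ᵐᵒᵖ
  | DGen.X => op (Yig q t)
  | DGen.Xi => op (Yg q t)
  | DGen.Y => op (Xig q t)
  | DGen.Yi => op (Xg q t)
  | DGen.T => op (Tg q t)

lemma f_rel : ∀ ⦃a b : FreeAlgebra ℂ DGen⦄, DahaRel q t a b →
    (FreeAlgebra.lift ℂ (f q t)) a = (FreeAlgebra.lift ℂ (f q t)) b := by
  intro a b h
  induction h with
  | XXi => simp [f, ← op_mul, relYYi]
  | XiX => simp [f, ← op_mul, relYiY]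
  | YYi => simp [f, ← op_mul, relXXi]
  | YiY => simp [f, ← op_mul, relXiX]
  | TXT =>
      simp only [map_mul, FreeAlgebra.lift_ι_apply, f, ← op_mul]
      rw [← mul_assoc, relTYiT]
  | TYiT =>
      simp only [map_mul, FreeAlgebra.lift_ι_apply, f, ← op_mul]
      rw [← mul_assoc, relTXT]
  | XY =>
      simp only [map_mul, map_smul, FreeAlgebra.lift_ι_apply, f, ← op_mul, ← op_smul]
      apply congrArg
      rw [keyXiYi]
      simp [mul_assoc]
  | hecke =>
      simp only [map_mul, map_sub, map_add, map_zero, FreeAlgebra.lift_ι_apply, f,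
        AlgHom.commutes]
      apply unop_injective
      simp only [unop_mul, unop_sub, unop_add, unop_zero, unop_op]
      have halg : ∀ c : ℂ, unop (algebraMap ℂ (DAHA q t)ᵐᵒᵖ c) = algebraMap ℂ (DAHA q t) c :=
        fun c => rfl
      rw [halg, halg]
      exact relHecke' q t

/-- The anti-homomorphism as an algebra hom into the opposite algebra. -/
def Phi : DAHA q t →ₐ[ℂ] (DAHA q t)ᵐᵒᵖ :=
  RingQuot.liftAlgHom ℂ ⟨FreeAlgebra.lift ℂ (f q t), f_rel q t⟩

lemma Phi_gen (g : DGen) :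
    Phi q t (RingQuot.mkAlgHom ℂ (DahaRel q t) (FreeAlgebra.ι ℂ g)) = f q t g := by
  rw [Phi, RingQuot.liftAlgHom_mkAlgHom_apply, FreeAlgebra.lift_ι_apply]

/-- The anti-automorphism as a linear map. -/
def phi : DAHA q t →ₗ[ℂ] DAHA q t :=
  (opLinearEquiv ℂ).symm.toLinearMap ∘ₗ (Phi q t).toLinearMap

lemma phi_apply (a : DAHA q t) : phi q t a = unop (Phi q t a) := rfl

lemma phi_one : phi q t 1 = 1 := by simp [phi_apply]

lemma phi_mul (a b : DAHA q t) : phi q t (a * b) = phi q t b * phi q t a := by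
  simp [phi_apply, map_mul]

lemma phi_X : phi q t (Xg q t) = Yig q t := by
  rw [phi_apply, Xg, Phi_gen]; rfl

lemma phi_Xi : phi q t (Xig q t) = Yg q t := by
  rw [phi_apply, Xig, Phi_gen]; rfl

lemma phi_Y : phi q t (Yg q t) = Xig q t := by
  rw [phi_apply, Yg, Phi_gen]; rfl

lemma phi_Yi : phi q t (Yig q t) = Xg q t := by
  rw [phi_apply, Yig, Phi_gen]; rfl

lemma phi_T : phi q t (Tg q t) = Tg q t := by
  rw [phi_apply, Tg, Phi_gen]; rfl

/-- `phi` is an involution. -/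
lemma phi_invol : Function.Involutive (phi q t) := by
  have hmul : ∀ a b : DAHA q t, phi q t (phi q t (a * b)) =
      phi q t (phi q t a) * phi q t (phi q t b) := by
    intro a b; rw [phi_mul, phi_mul]
  let Ψ : DAHA q t →ₐ[ℂ] DAHA q t :=
    AlgHom.ofLinearMap ((phi q t) ∘ₗ (phi q t)) (by simp [phi_one]) hmul
  have hΨ : Ψ = AlgHom.id ℂ (DAHA q t) := by
    apply RingQuot.ringQuot_ext'
    apply FreeAlgebra.hom_ext
    funext g
    show Ψ (RingQuot.mkAlgHom ℂ (DahaRel q t) (FreeAlgebra.ι ℂ g)) =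
      RingQuot.mkAlgHom ℂ (DahaRel q t) (FreeAlgebra.ι ℂ g)
    have : ∀ a : DAHA q t, Ψ a = phi q t (phi q t a) := fun a => rfl
    cases g
    · rw [this]; show phi q t (phi q t (Xg q t)) = Xg q t; rw [phi_X, phi_Yi]
    · rw [this]; show phi q t (phi q t (Xig q t)) = Xig q t; rw [phi_Xi, phi_Y]
    · rw [this]; show phi q t (phi q t (Yg q t)) = Yg q t; rw [phi_Y, phi_Xi]
    · rw [this]; show phi q t (phi q t (Yig q t)) = Yig q t; rw [phi_Yi, phi_X]
    · rw [this]; show phi q t (phi q t (Tg q t)) = Tg q t; rw [phi_T, phi_T]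
  intro a
  have : Ψ a = AlgHom.id ℂ (DAHA q t) a := by rw [hΨ]
  exact (show Ψ a = a by simpa using this)

end DahaAux

open MulOpposite

/-- The assignments `φ(X) = Y⁻¹`, `φ(Y) = X⁻¹`, `φ(T) = T` extend uniquely to a ℂ-linear
anti-automorphism of `H_{q,t}`: a ℂ-linear bijection with `φ(1) = 1` and
`φ(a·b) = φ(b)·φ(a)`. -/
theorem daha_antiautomorphism (q t : ℂ) (hq : q ≠ 0) (ht : t ≠ 0) :
    ∃! φ : DAHA q t →ₗ[ℂ] DAHA q t,
      Function.Bijective φ ∧ φ 1 = 1 ∧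
      (∀ a b : DAHA q t, φ (a * b) = φ b * φ a) ∧
      φ (Xg q t) = Yig q t ∧ φ (Yg q t) = Xig q t ∧ φ (Tg q t) = Tg q t := by
  refine ⟨DahaAux.phi q t, ⟨(DahaAux.phi_invol q t).bijective, DahaAux.phi_one q t,
    DahaAux.phi_mul q t, DahaAux.phi_X q t, DahaAux.phi_Y q t, DahaAux.phi_T q t⟩, ?_⟩
  rintro φ' ⟨-, h1, hmul, hX, hY, hT⟩
  -- derived values on the inverse generators
  have hXi : φ' (Xig q t) = Yg q t := by
    have e1 : φ' (Xig q t) * Yig q t = 1 := by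
      rw [← hX, ← hmul, DahaAux.relXXi, h1]
    calc φ' (Xig q t) = φ' (Xig q t) * (Yig q t * Yg q t) := by
          rw [DahaAux.relYiY, mul_one]
      _ = (φ' (Xig q t) * Yig q t) * Yg q t := by rw [mul_assoc]
      _ = Yg q t := by rw [e1, one_mul]
  have hYi : φ' (Yig q t) = Xg q t := by
    have e1 : φ' (Yig q t) * Xig q t = 1 := by
      rw [← hY, ← hmul, DahaAux.relYYi, h1]
    calc φ' (Yig q t) = φ' (Yig q t) * (Xig q t * Xg q t) := by
          rw [DahaAux.relXiX, mul_one]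
      _ = (φ' (Yig q t) * Xig q t) * Xg q t := by rw [mul_assoc]
      _ = Xg q t := by rw [e1, one_mul]
  -- package φ' as an algebra hom into the opposite algebra
  have hmul' : ∀ a b : DAHA q t,
      ((opLinearEquiv ℂ).toLinearMap ∘ₗ φ') (a * b) =
      ((opLinearEquiv ℂ).toLinearMap ∘ₗ φ') a * ((opLinearEquiv ℂ).toLinearMap ∘ₗ φ') b := by
    intro a b
    simp only [LinearMap.comp_apply, LinearEquiv.coe_toLinearMap]
    rw [hmul]
    exact (op_mul _ _).symm
  let Φ' : DAHA q t →ₐ[ℂ] (DAHA q t)ᵐᵒᵖ :=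
    AlgHom.ofLinearMap ((opLinearEquiv ℂ).toLinearMap ∘ₗ φ') (by simp [h1]) hmul'
  have hΦ' : ∀ a, Φ' a = op (φ' a) := fun a => rfl
  have key : Φ' = DahaAux.Phi q t := by
    apply RingQuot.ringQuot_ext'
    apply FreeAlgebra.hom_ext
    funext g
    show Φ' (RingQuot.mkAlgHom ℂ (DahaRel q t) (FreeAlgebra.ι ℂ g)) =
      DahaAux.Phi q t (RingQuot.mkAlgHom ℂ (DahaRel q t) (FreeAlgebra.ι ℂ g))
    rw [DahaAux.Phi_gen, hΦ']
    cases g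
    · show op (φ' (Xg q t)) = _; rw [hX]; rfl
    · show op (φ' (Xig q t)) = _; rw [hXi]; rfl
    · show op (φ' (Yg q t)) = _; rw [hY]; rfl
    · show op (φ' (Yig q t)) = _; rw [hYi]; rfl
    · show op (φ' (Tg q t)) = _; rw [hT]; rfl
  ext a
  apply op_injective
  rw [← hΦ', key]
  rfl
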